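/- Let g : ℝⁿ → ℝ be convex with S = {x : g(x) ≤ 0} ≠ ∅. Let g⁺(x) = max{0, g(x)} and for each x with g(x) > 0 let ℓ(x) ∈ ∂g(x) be a subgradient (necessarily ℓ(x) ≠ 0). For α ∈ (0,2) define T(x) = x − α g⁺(x)/‖ℓ(x)‖² · ℓ(x) when g(x) > 0, and T(x) = x otherwise. Then S ⊆ Fix T and T is an α-relaxed cutter with respect to S: α⟨T(x) − x, z − x⟩ ≥ ‖T(x) − x‖² for all x ∈ ℝⁿ and z ∈ S. -/

import Mathlib

open RealInnerProductSpace

theorem subgradient_projection_relaxed_cutter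
    (n : ℕ) (g : EuclideanSpace ℝ (Fin n) → ℝ)
    (hg : ConvexOn ℝ Set.univ g)
    (S : Set (EuclideanSpace ℝ (Fin n))) (hS : S = {x | g x ≤ 0}) (hSne : S.Nonempty)
    (ℓ : EuclideanSpace ℝ (Fin n) → EuclideanSpace ℝ (Fin n))
    (hℓ : ∀ x, 0 < g x → ∀ y, ⟪ℓ x, y - x⟫ ≤ g y - g x)
    (α : ℝ) (hα : α ∈ Set.Ioo (0 : ℝ) 2)
    (T : EuclideanSpace ℝ (Fin n) → EuclideanSpace ℝ (Fin n))
    (hTpos : ∀ x, 0 < g x → T x = x - (α * max 0 (g x) / ‖ℓ x‖ ^ 2) • ℓ x)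
    (hTnonpos : ∀ x, ¬ 0 < g x → T x = x) :
    S ⊆ Function.fixedPoints T ∧
      ∀ x z, z ∈ S → α * ⟪T x - x, z - x⟫ ≥ ‖T x - x‖ ^ 2 := by
  constructor
  · intro x hx
    have hgx : g x ≤ 0 := by rwa [hS] at hx
    exact hTnonpos x (not_lt.mpr hgx)
  · intro x z hz
    have hgz : g z ≤ 0 := by rwa [hS] at hz
    by_cases hx : 0 < g x
    · have hkey : ⟪ℓ x, z - x⟫ ≤ -g x := by
        have := hℓ x hx z
        linarith
      have hℓne : ℓ x ≠ 0 := by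
        intro h
        rw [h, inner_zero_left] at hkey
        linarith
      have hnorm : (0:ℝ) < ‖ℓ x‖ ^ 2 := pow_pos (norm_pos_iff.mpr hℓne) 2
      have hmax : max 0 (g x) = g x := max_eq_right hx.le
      set c : ℝ := α * g x / ‖ℓ x‖ ^ 2 with hc
      have hcpos : 0 < c := div_pos (mul_pos hα.1 hx) hnorm
      have hTx : T x - x = (-c) • ℓ x := by
        rw [hTpos x hx, hmax, ← hc, neg_smul]
        abel
      rw [hTx]
      have hlhs : ⟪(-c) • ℓ x, z - x⟫ = -c * ⟪ℓ x, z - x⟫ := by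
        rw [real_inner_smul_left]
      have hrhs : ‖(-c) • ℓ x‖ ^ 2 = c ^ 2 * ‖ℓ x‖ ^ 2 := by
        rw [norm_smul]
        simp [mul_pow]
      rw [hlhs, hrhs]
      have h1 : -c * ⟪ℓ x, z - x⟫ ≥ c * g x := by
        nlinarith
      have h2 : α * (c * g x) = c ^ 2 * ‖ℓ x‖ ^ 2 := by
        rw [hc]
        field_simp
      have h3 := mul_le_mul_of_nonneg_left h1 hα.1.le
      linarith
    · rw [hTnonpos x hx]
      simp
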